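/- Let H be the digraph with vertex set {1,2,3,4,5,6} and arc set {12, 34, 43, 56, 65, 23, 25, 14, 16, 54, 36} (a copy of N2). Given a digraph D with M = |V(D)|, let D' be the digraph obtained from D by replacing every arc uv of D with the gadget consisting of three new vertices x_{uv}, y_{uv}, z_{uv} (distinct for different arcs) and the four arcs u→x_{uv}, v→z_{uv}, x_{uv}→y_{uv}, z_{uv}→y_{uv} (so D' has no arcs between vertices of D). Define costs on D': for every t ∈ V(D), c_1(t) = 1, c_5(t) = 0, and c_i(t) = 2M+1 for i ∉ {1,5}; c_4(x_{uv}) = 2M+1 and c_6(z_{uv}) = 2M+1 for every arc uv of D; all remaining costs are 0. Then a homomorphism of D' to H exists, and the minimum cost of a homomorphism of D' to H equals |V(D)| − α(D). -/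
import Mathlib


namespace MinHomN2

/-- the target digraph: vertices 1,…,6 (as 0,…,5 : Fin 6) and arcs
{12, 34, 43, 56, 65, 23, 25, 14, 16, 54, 36}; a copy of N2. -/
def HArc : Fin 6 → Fin 6 → Prop := fun a b =>
  (a, b) ∈ ([(0,1),(2,3),(3,2),(4,5),(5,4),(1,2),(1,4),(0,3),(0,5),(4,3),(2,5)] :
    List (Fin 6 × Fin 6))

/-- vertex set of D': the vertices of D together with three gadget vertices
x_{uv} = (e,0), y_{uv} = (e,1), z_{uv} = (e,2) for every arc e = uv of D. -/
abbrev GV (α : Type*) (Ad : α → α → Prop) : Type _ :=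
  α ⊕ ({p : α × α // Ad p.1 p.2} × Fin 3)

/-- arcs of D': for each arc e = uv of D the gadget arcs
u→x_e, v→z_e, x_e→y_e, z_e→y_e. -/
def GArc {α : Type*} (Ad : α → α → Prop) : GV α Ad → GV α Ad → Prop
  | Sum.inl u, Sum.inr (e, i) => (u = e.1.1 ∧ i = 0) ∨ (u = e.1.2 ∧ i = 2)
  | Sum.inr (e, i), Sum.inr (e', i') => e = e' ∧ ((i = 0 ∧ i' = 1) ∨ (i = 2 ∧ i' = 1))
  | _, _ => False

/-- costs (with M = |V(D)|): for t ∈ V(D), c_1(t) = 1, c_5(t) = 0, c_i(t) = 2M+1 for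
i ∉ {1,5}; c_4(x_e) = 2M+1 and c_6(z_e) = 2M+1 for every arc e; all remaining costs
are 0. (Vertices 1, 5, 4, 6 are indices 0, 4, 3, 5 : Fin 6.) -/
def cost {α : Type*} (Ad : α → α → Prop) (M : ℕ) : Fin 6 → GV α Ad → ℕ
  | h, Sum.inl _ => if h = 0 then 1 else if h = 4 then 0 else 2 * M + 1
  | h, Sum.inr (_, i) => if (i = 0 ∧ h = 3) ∨ (i = 2 ∧ h = 5) then 2 * M + 1 else 0

instance : DecidableRel HArc := fun a b => by unfold HArc; infer_instance

/-- Lemma 4.5: a homomorphism of D' to H exists, and the minimum cost of a homomorphism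
of D' to H equals |V(D)| − α(D). -/
theorem stmt17 {α : Type*} [Fintype α] [DecidableEq α]
    (Ad : α → α → Prop) [DecidableRel Ad] (hirr : Irreflexive Ad) :
    ∃ m : ℕ,
      IsGreatest {n : ℕ | ∃ S : Finset α,
        (∀ a ∈ S, ∀ b ∈ S, a ≠ b → ¬ Ad a b) ∧ S.card = n} m ∧
      (∃ f : GV α Ad → Fin 6, ∀ x y, GArc Ad x y → HArc (f x) (f y)) ∧
      IsLeast {n : ℕ | ∃ f : GV α Ad → Fin 6,
          (∀ x y, GArc Ad x y → HArc (f x) (f y)) ∧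
          (∑ w, cost Ad (Fintype.card α) (f w) w) = n}
        (Fintype.card α - m) := by
  classical
  set M := Fintype.card α with hM
  set P : ℕ → Prop := fun n => ∃ S : Finset α,
      (∀ a ∈ S, ∀ b ∈ S, a ≠ b → ¬ Ad a b) ∧ S.card = n with hPdef
  have hP0 : P 0 := ⟨∅, by simp, by simp⟩
  have hbound : ∀ n, P n → n ≤ M := by
    rintro n ⟨S, -, rfl⟩; exact Finset.card_le_univ S
  set m := Nat.findGreatest P M with hmdef
  have hPm : P m := Nat.findGreatest_spec (Nat.zero_le M) hP0
  have hub : ∀ n, P n → n ≤ m := fun n hn => Nat.le_findGreatest (hbound n hn) hn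
  obtain ⟨S, hSind, hScard⟩ := hPm
  -- key facts about HArc
  have k45 : ∀ b : Fin 6, HArc 4 b → b ≠ 3 → b = 5 := by decide
  have k43 : ∀ b : Fin 6, HArc 4 b → b ≠ 5 → b = 3 := by decide
  have k54 : ∀ b : Fin 6, HArc 5 b → b = 4 := by decide
  have k32 : ∀ b : Fin 6, HArc 3 b → b = 2 := by decide
  -- the homomorphism built from S
  set f : GV α Ad → Fin 6 := fun w =>
    match w with
    | Sum.inl u => if u ∈ S then 4 else 0
    | Sum.inr (e, i) =>
        if i = 0 then (if e.1.1 ∈ S then 5 else 1)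
        else if i = 1 then (if e.1.1 ∈ S then 4 else 2)
        else (if e.1.2 ∈ S then 3 else 1) with hfdef
  have hnotboth : ∀ e : {p : α × α // Ad p.1 p.2}, e.1.1 ∈ S → e.1.2 ∈ S → False := by
    intro e h1 h2
    refine hSind _ h1 _ h2 (fun heq => hirr _ (heq ▸ e.2)) e.2
  have hfhom : ∀ x y, GArc Ad x y → HArc (f x) (f y) := by
    rintro (u | ⟨e, i⟩) (v | ⟨e', i'⟩) h <;> try exact h.elim
    · rcases h with ⟨rfl, rfl⟩ | ⟨rfl, rfl⟩
      · simp only [hfdef]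
        by_cases h1 : e'.1.1 ∈ S <;> simp [h1] <;> decide
      · simp only [hfdef]
        by_cases h2 : e'.1.2 ∈ S
        · have h1 : e'.1.1 ∉ S := fun h1 => hnotboth e' h1 h2
          simp [h1, h2]; decide
        · by_cases h1 : e'.1.1 ∈ S <;> simp [h1, h2] <;> decide
    · obtain ⟨rfl, hii⟩ := h
      rcases hii with ⟨rfl, rfl⟩ | ⟨rfl, rfl⟩
      · simp only [hfdef]
        by_cases h1 : e.1.1 ∈ S <;> simp [h1] <;> decide
      · simp only [hfdef]
        by_cases h2 : e.1.2 ∈ S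
        · have h1 : e.1.1 ∉ S := fun h1 => hnotboth e h1 h2
          simp [h1, h2]; decide
        · by_cases h1 : e.1.1 ∈ S <;> simp [h1, h2] <;> decide
  refine ⟨m, ⟨⟨S, hSind, hScard⟩, fun n hn => hub n hn⟩, ⟨f, hfhom⟩, ?_, ?_⟩
  · -- membership: cost of f is M - m
    refine ⟨f, hfhom, ?_⟩
    rw [Fintype.sum_sum_type]
    have h1 : ∀ u : α, cost Ad M (f (Sum.inl u)) (Sum.inl u)
        = if u ∈ S then 0 else 1 := by
      intro u
      by_cases hu : u ∈ S <;> simp [hfdef, cost, hu]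
    have h2 : ∀ p : {p : α × α // Ad p.1 p.2} × Fin 3,
        cost Ad M (f (Sum.inr p)) (Sum.inr p) = 0 := by
      rintro ⟨e, i⟩
      fin_cases i <;>
        · by_cases h1 : e.1.1 ∈ S <;> by_cases h2 : e.1.2 ∈ S <;>
            simp [hfdef, cost, h1, h2]
    rw [Finset.sum_congr rfl (fun u _ => h1 u), Finset.sum_eq_zero (fun p _ => h2 p),
      add_zero, Finset.sum_ite, Finset.sum_const, Finset.sum_const]
    simp only [smul_eq_mul, mul_one, mul_zero, zero_add]
    rw [show (Finset.univ.filter (fun u => u ∉ S)) = Finset.univ \ S by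
      ext u; simp]
    rw [Finset.card_sdiff_of_subset (Finset.subset_univ S), Finset.card_univ, hScard]
  · -- lower bound
    rintro n ⟨g, hg, rfl⟩
    by_cases hbig : ∃ w : GV α Ad, 2 * M + 1 ≤ cost Ad M (g w) w
    · obtain ⟨w, hw⟩ := hbig
      have : cost Ad M (g w) w ≤ ∑ v, cost Ad M (g v) v :=
        Finset.single_le_sum (f := fun v => cost Ad M (g v) v)
          (fun i _ => Nat.zero_le _) (Finset.mem_univ w)
      omega
    · push_neg at hbig
      have hval : ∀ u : α, g (Sum.inl u) = 0 ∨ g (Sum.inl u) = 4 := by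
        intro u
        by_contra h
        push_neg at h
        have := hbig (Sum.inl u)
        simp [cost, h.1, h.2] at this
      have hnopen : ∀ (e : {p : α × α // Ad p.1 p.2}) (i : Fin 3),
          ¬ ((i = 0 ∧ g (Sum.inr (e, i)) = 3) ∨ (i = 2 ∧ g (Sum.inr (e, i)) = 5)) := by
        intro e i hcond
        have := hbig (Sum.inr (e, i))
        simp [cost, hcond] at this
      set T : Finset α := Finset.univ.filter (fun u => g (Sum.inl u) = 4) with hT
      have hTind : ∀ a ∈ T, ∀ b ∈ T, a ≠ b → ¬ Ad a b := by
        intro a ha b hb hab had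
        simp only [hT, Finset.mem_filter] at ha hb
        set e : {p : α × α // Ad p.1 p.2} := ⟨(a, b), had⟩ with he
        have hx : HArc (g (Sum.inl a)) (g (Sum.inr (e, 0))) :=
          hg _ _ (Or.inl ⟨rfl, rfl⟩)
        have hz : HArc (g (Sum.inl b)) (g (Sum.inr (e, 2))) :=
          hg _ _ (Or.inr ⟨rfl, rfl⟩)
        have hxy : HArc (g (Sum.inr (e, 0))) (g (Sum.inr (e, 1))) :=
          hg _ _ ⟨rfl, Or.inl ⟨rfl, rfl⟩⟩
        have hzy : HArc (g (Sum.inr (e, 2))) (g (Sum.inr (e, 1))) :=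
          hg _ _ ⟨rfl, Or.inr ⟨rfl, rfl⟩⟩
        rw [ha.2] at hx; rw [hb.2] at hz
        have hx5 : g (Sum.inr (e, 0)) = 5 :=
          k45 _ hx (fun h3 => hnopen e 0 (Or.inl ⟨rfl, h3⟩))
        have hz3 : g (Sum.inr (e, 2)) = 3 :=
          k43 _ hz (fun h5 => hnopen e 2 (Or.inr ⟨rfl, h5⟩))
        rw [hx5] at hxy; rw [hz3] at hzy
        have h4 := k54 _ hxy
        have h2 := k32 _ hzy
        rw [h4] at h2
        exact absurd h2 (by decide)
      have hTm : T.card ≤ m := hub T.card ⟨T, hTind, rfl⟩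
      have hsum : ∀ u : α, cost Ad M (g (Sum.inl u)) (Sum.inl u)
          = if u ∈ T then 0 else 1 := by
        intro u
        by_cases hu : u ∈ T
        · have h4 : g (Sum.inl u) = 4 := by
            simpa [hT] using hu
          simp [cost, h4, hu]
        · have h0 : g (Sum.inl u) = 0 := by
            rcases hval u with h | h
            · exact h
            · exact absurd (by simpa [hT] using h) hu
          simp [cost, h0, hu]
      have hle : M - T.card ≤ ∑ w, cost Ad M (g w) w := by
        rw [Fintype.sum_sum_type]
        have : (∑ u : α, cost Ad M (g (Sum.inl u)) (Sum.inl u)) = M - T.card := by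
          rw [Finset.sum_congr rfl (fun u _ => hsum u), Finset.sum_ite,
            Finset.sum_const, Finset.sum_const]
          simp only [smul_eq_mul, mul_one, mul_zero, zero_add]
          rw [show (Finset.univ.filter (fun u => u ∉ T)) = Finset.univ \ T by
            ext u; simp]
          rw [Finset.card_sdiff_of_subset (Finset.subset_univ T), Finset.card_univ]
        omega
      omega


end MinHomN2
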